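/- Let n ≥ 5 be odd, κ > 0, and s ∈ ℝ with s ∉ {0, 2κ}. Then the matrix Q = Q(n,κ,s) has rank(Q) = n − 1. -/

import Mathlib

open Matrix Finset

/-- The matrix `Q(n,κ,s)`; indices `0,…,n−1` of `Fin n` correspond to moves `1,…,n`:
`q_ii = 0`; for `i < j`: `q_ij = −2κ+s` if `(i,j)=(1,n)` (i.e. `j−i = n−1`),
`q_ij = κ` if `1 ≤ j−i ≤ (n−1)/2`, and `q_ij = −κ` if `(n+1)/2 ≤ j−i ≤ n−2`;
and `q_ij = −q_ji` for `i > j`. -/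
def Qmat (n : ℕ) (κ s : ℝ) : Matrix (Fin n) (Fin n) ℝ :=
  Matrix.of fun i j =>
    if (i : ℕ) = (j : ℕ) then 0
    else if (i : ℕ) < (j : ℕ) then
      (if (j : ℕ) - (i : ℕ) = n - 1 then -2 * κ + s
       else if (j : ℕ) - (i : ℕ) ≤ (n - 1) / 2 then κ else -κ)
    else
      -(if (i : ℕ) - (j : ℕ) = n - 1 then -2 * κ + s
        else if (i : ℕ) - (j : ℕ) ≤ (n - 1) / 2 then κ else -κ)

/-- Closed form for the "pure" (circulant) rows `1 ≤ i ≤ 2m−1`. -/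
lemma Qmat_row_pure (m : ℕ) (hm : 2 ≤ m) (κ s : ℝ)
    (i j : ℕ) (hi : i < 2*m+1) (hj : j < 2*m+1) (hi1 : 1 ≤ i) (hi2 : i ≤ 2*m - 1) :
    Qmat (2*m+1) κ s ⟨i, hi⟩ ⟨j, hj⟩ =
      if j = i then 0
      else if (i < j ∧ j ≤ i + m) ∨ (j + m + 1 ≤ i) then κ else -κ := by
  simp only [Qmat, Matrix.of_apply, Fin.val_mk]
  split_ifs <;> first | (exfalso; omega) | ring

/-- Closed form for the last row `i = 2m`. -/
lemma Qmat_row_last (m : ℕ) (hm : 2 ≤ m) (κ s : ℝ)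
    (i j : ℕ) (hi : i < 2*m+1) (hj : j < 2*m+1) (hieq : i = 2*m) :
    Qmat (2*m+1) κ s ⟨i, hi⟩ ⟨j, hj⟩ =
      if j = 2*m then 0 else if j = 0 then 2*κ - s else if m ≤ j then -κ else κ := by
  subst hieq
  simp only [Qmat, Matrix.of_apply, Fin.val_mk]
  split_ifs <;> first | (exfalso; omega) | ring

/-- Sum over `range m`, splitting off the first term. -/
lemma sum_shift (f : ℕ → ℝ) (m : ℕ) (hm : 1 ≤ m) :
    ∑ k ∈ range m, f k = (∑ k ∈ range (m-1), f (k+1)) + f 0 := by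
  obtain ⟨p, rfl⟩ : ∃ p, m = p + 1 := ⟨m - 1, by omega⟩
  simp [Finset.sum_range_succ']
/-- Key lemma: a kernel vector of `Qmat` vanishing at coordinate `0` is zero. -/
lemma Qmat_ker_eq_zero (n m : ℕ) (hn : n = 2*m+1) (hm : 2 ≤ m) (κ s : ℝ) (hκ : κ ≠ 0)
    (v : Fin n → ℝ) (hv : (Qmat n κ s).mulVec v = 0)
    (h0 : v ⟨0, by omega⟩ = 0) : v = 0 := by
  subst hn
  set a : ℕ → ℝ := fun t => if h : t < 2*m+1 then v ⟨t, h⟩ else 0 with haDef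
  have ha : ∀ (t : ℕ) (h : t < 2*m+1), a t = v ⟨t, h⟩ := fun t h => dif_pos h
  have ha0 : a 0 = 0 := by rw [ha 0 (by omega)]; exact h0
  have hsum : ∀ i : Fin (2*m+1), ∑ j, Qmat (2*m+1) κ s i j * v j = 0 := by
    intro i
    have h := congrFun hv i
    simpa [Matrix.mulVec, dotProduct] using h
  have hone : ∀ (t : ℕ) (ht : t < 2*m+1) (c : ℝ),
      (∑ j : Fin (2*m+1), (if (j:ℕ) = t then c else 0) * v j) = c * a t := by
    intro t ht c
    rw [Finset.sum_eq_single (⟨t, ht⟩ : Fin (2*m+1))]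
    · rw [if_pos rfl, ha t ht]
    · intro b _ hb
      rw [if_neg (fun hb' => hb (Fin.ext hb')), zero_mul]
    · intro h; exact absurd (Finset.mem_univ _) h
  have hdiff : ∀ (i₁ i₂ t₁ t₂ t₃ t₄ : ℕ) (hi₁ : i₁ < 2*m+1) (hi₂ : i₂ < 2*m+1)
      (ht₁ : t₁ < 2*m+1) (ht₂ : t₂ < 2*m+1) (ht₃ : t₃ < 2*m+1) (ht₄ : t₄ < 2*m+1)
      (c₁ c₂ c₃ c₄ : ℝ),
      (∀ j : Fin (2*m+1), Qmat (2*m+1) κ s ⟨i₂, hi₂⟩ j - Qmat (2*m+1) κ s ⟨i₁, hi₁⟩ j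
        = (if (j:ℕ) = t₁ then c₁ else 0) + (if (j:ℕ) = t₂ then c₂ else 0)
          + (if (j:ℕ) = t₃ then c₃ else 0) + (if (j:ℕ) = t₄ then c₄ else 0)) →
      c₁ * a t₁ + c₂ * a t₂ + c₃ * a t₃ + c₄ * a t₄ = 0 := by
    intro i₁ i₂ t₁ t₂ t₃ t₄ hi₁ hi₂ ht₁ ht₂ ht₃ ht₄ c₁ c₂ c₃ c₄ hpt
    have hsub : ∑ j : Fin (2*m+1),
        (Qmat (2*m+1) κ s ⟨i₂,hi₂⟩ j - Qmat (2*m+1) κ s ⟨i₁,hi₁⟩ j) * v j = 0 := by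
      simp only [sub_mul]
      rw [Finset.sum_sub_distrib, hsum ⟨i₂,hi₂⟩, hsum ⟨i₁,hi₁⟩]
      norm_num
    have h2 : ∑ j : Fin (2*m+1),
        ((if (j:ℕ) = t₁ then c₁ else 0) * v j + (if (j:ℕ) = t₂ then c₂ else 0) * v j
          + (if (j:ℕ) = t₃ then c₃ else 0) * v j + (if (j:ℕ) = t₄ then c₄ else 0) * v j)
        = 0 := by
      refine Eq.trans (Finset.sum_congr rfl fun j _ => ?_) hsub
      rw [hpt j]; ring
    rw [Finset.sum_add_distrib, Finset.sum_add_distrib, Finset.sum_add_distrib,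
        hone t₁ ht₁ c₁, hone t₂ ht₂ c₂, hone t₃ ht₃ c₃, hone t₄ ht₄ c₄] at h2
    exact h2
  have hcan : ∀ x : ℝ, κ * x = 0 → x = 0 := by
    intro x hx
    rcases mul_eq_zero.mp hx with h | h
    · exact absurd h hκ
    · exact h
  -- E1 relations
  have hE1 : ∀ k, 1 ≤ k → k + 1 ≤ m → 2 * a (k+m+1) = a k + a (k+1) := by
    intro k hk1 hk2
    have h : -κ * a k + -κ * a (k+1) + 2*κ * a (k+m+1) + 0 * a 0 = 0 := by
      apply hdiff k (k+1) k (k+1) (k+m+1) 0 (by omega) (by omega) (by omega) (by omega)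
        (by omega) (by omega)
      intro j
      obtain ⟨j, hj⟩ := j
      rw [Qmat_row_pure m hm κ s (k+1) j (by omega) hj (by omega) (by omega),
          Qmat_row_pure m hm κ s k j (by omega) hj (by omega) (by omega)]
      simp only [Fin.val_mk]
      split_ifs <;> first | (exfalso; omega) | ring
    have h2 : κ * (2 * a (k+m+1) - (a k + a (k+1))) = 0 := by linear_combination h
    have := hcan _ h2; linarith
  -- B relations: 2 a k = a (k+m) + a (k+m+1) for k+1 ≤ m
  have hB : ∀ k, k + 1 ≤ m → 2 * a k = a (k+m) + a (k+m+1) := by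
    intro k hk
    by_cases hc : k + 2 ≤ m
    · have h : -κ * a (k+m) + -κ * a (k+m+1) + 2*κ * a k + 0 * a 0 = 0 := by
        apply hdiff (k+m) (k+m+1) (k+m) (k+m+1) k 0 (by omega) (by omega) (by omega)
          (by omega) (by omega) (by omega)
        intro j
        obtain ⟨j, hj⟩ := j
        rw [Qmat_row_pure m hm κ s (k+m+1) j (by omega) hj (by omega) (by omega),
            Qmat_row_pure m hm κ s (k+m) j (by omega) hj (by omega) (by omega)]
        simp only [Fin.val_mk]
        split_ifs <;> first | (exfalso; omega) | ring
      have h2 : κ * (2 * a k - (a (k+m) + a (k+m+1))) = 0 := by linear_combination h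
      have := hcan _ h2; linarith
    · have hk3 : k + 1 = m := by omega
      have h : -κ * a (k+m) + -κ * a (k+m+1) + 2*κ * a k + (κ - s) * a 0 = 0 := by
        apply hdiff (k+m) (k+m+1) (k+m) (k+m+1) k 0 (by omega) (by omega) (by omega)
          (by omega) (by omega) (by omega)
        intro j
        obtain ⟨j, hj⟩ := j
        rw [Qmat_row_last m hm κ s (k+m+1) j (by omega) hj (by omega),
            Qmat_row_pure m hm κ s (k+m) j (by omega) hj (by omega) (by omega)]
        simp only [Fin.val_mk]
        split_ifs <;> first | (exfalso; omega) | ring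
      rw [ha0] at h
      have h2 : κ * (2 * a k - (a (k+m) + a (k+m+1))) = 0 := by linear_combination h
      have := hcan _ h2; linarith
  -- second differences: arithmetic progression on the first half
  have hrec : ∀ k, k + 3 ≤ m → a (k+3) = 2 * a (k+2) - a (k+1) := by
    intro k hk
    have hb := hB (k+2) (by omega)
    have he1 := hE1 (k+1) (by omega) (by omega)
    have he2 := hE1 (k+2) (by omega) (by omega)
    rw [show k+2+m = k+1+m+1 by omega] at hb
    rw [show k+1+1 = k+2 by omega] at he1
    rw [show k+2+m+1 = k+1+m+1+1 by omega, show k+2+1 = k+3 by omega] at he2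
    linarith
  have hAP : ∀ t, 1 + t ≤ m → a (1+t) = a 1 + (t:ℝ) * (a 2 - a 1) := by
    have key2 : ∀ t, (1 + t ≤ m → a (1+t) = a 1 + (t:ℝ) * (a 2 - a 1)) ∧
        (1 + (t+1) ≤ m → a (1+(t+1)) = a 1 + ((t:ℝ)+1) * (a 2 - a 1)) := by
      intro t
      induction t with
      | zero =>
        constructor
        · intro _; norm_num
        · intro _
          rw [show 1+(0+1) = 2 by norm_num]
          push_cast; ring
      | succ t ih =>
        constructor
        · intro h
          have h1 := ih.2 h
          rw [h1]; push_cast; ring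
        · intro h
          have h1 := ih.1 (by omega)
          have h2 := ih.2 (by omega)
          have h3 := hrec t (by omega)
          rw [show 1+t = t+1 by omega] at h1
          rw [show 1+(t+1) = t+2 by omega] at h2
          rw [show 1+(t+1+1) = t+3 by omega, h3, h1, h2]
          push_cast; ring
    exact fun t ht => (key2 t).1 ht
  -- boundary relations
  have hb0 := hB 0 (by omega)
  rw [show 0+m = m by omega, ha0] at hb0
  have hmp1 : a (m+1) = - a m := by linarith
  have hb1 := hB 1 (by omega)
  have he11 := hE1 1 (by omega) (by omega)
  rw [show 1+m = m+1 by omega, hmp1] at hb1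
  rw [show 1+m+1 = m+1+1 by omega, show (1+1:ℕ) = 2 from rfl] at he11
  have hEqI : 3 * a 1 - a 2 = -2 * a m := by linarith
  -- the row-m equation
  have hrowm := hsum ⟨m, by omega⟩
  set F : ℕ → ℝ := fun k => (if k < m then -κ else if k = m then 0 else κ) * a k with hF
  have hR : ∑ k ∈ range (2*m+1), F k = 0 := by
    rw [← Fin.sum_univ_eq_sum_range F (2*m+1)]
    refine Eq.trans (Finset.sum_congr rfl fun j _ => ?_) hrowm
    obtain ⟨j, hj⟩ := j
    simp only [hF, Fin.val_mk]
    rw [ha j hj, Qmat_row_pure m hm κ s m j (by omega) hj (by omega) (by omega)]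
    congr 1
    split_ifs <;> first | (exfalso; omega) | ring
  have hc := Finset.sum_Ico_consecutive F (show 0 ≤ m+1 by omega) (show m+1 ≤ 2*m+1 by omega)
  rw [← Finset.range_eq_Ico] at hc
  have hR2 : (∑ k ∈ range (m+1), F k) + ∑ k ∈ Ico (m+1) (2*m+1), F k = 0 := by
    rw [hc]
    rw [Finset.range_eq_Ico] at hR
    exact hR
  have hF1 : ∑ k ∈ range (m+1), F k = - κ * ∑ k ∈ range m, a k := by
    rw [Finset.sum_range_succ]
    have hFm : F m = 0 := by simp only [hF]; simp
    rw [hFm, add_zero, Finset.mul_sum]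
    refine Finset.sum_congr rfl fun k hk => ?_
    simp only [hF]
    rw [if_pos (Finset.mem_range.mp hk)]
  have hF2 : ∑ k ∈ Ico (m+1) (2*m+1), F k = κ * ∑ k ∈ range m, a (m+1+k) := by
    rw [Finset.sum_Ico_eq_sum_range, show 2*m+1 - (m+1) = m by omega, Finset.mul_sum]
    refine Finset.sum_congr rfl fun k _ => ?_
    simp only [hF]
    rw [if_neg (by omega), if_neg (by omega)]
  rw [hF1, hF2] at hR2
  have hSS : ∑ k ∈ range m, a (m+1+k) = ∑ k ∈ range m, a k := by
    have h2 : κ * ((∑ k ∈ range m, a (m+1+k)) - ∑ k ∈ range m, a k) = 0 := by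
      linear_combination hR2
    have := hcan _ h2; linarith
  -- decompose the two sums
  have hS1 : ∑ k ∈ range m, a k = ∑ k ∈ range (m-1), a (k+1) := by
    rw [sum_shift a m (by omega), ha0, add_zero]
  have hS2 : ∑ k ∈ range m, a (m+1+k)
      = (∑ k ∈ range (m-1), (a (k+1) + a (k+1+1)) / 2) + a (m+1) := by
    rw [sum_shift (fun k => a (m+1+k)) m (by omega)]
    simp only [Nat.add_zero]
    congr 1
    refine Finset.sum_congr rfl fun k hk => ?_
    have hk' := Finset.mem_range.mp hk
    have he := hE1 (k+1) (by omega) (by omega)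
    rw [show m+1+(k+1) = k+1+m+1 by omega]
    linarith
  have htel := Finset.sum_range_sub (fun k => a (k+1)) (m-1)
  rw [show m-1+1 = m by omega, show (0+1:ℕ) = 1 from rfl] at htel
  have hsplit2 : ∑ k ∈ range (m-1), (a (k+1) + a (k+1+1)) / 2
      = (∑ k ∈ range (m-1), a (k+1)) + (a m - a 1) / 2 := by
    calc ∑ k ∈ range (m-1), (a (k+1) + a (k+1+1)) / 2
        = ∑ k ∈ range (m-1), (a (k+1) + (a (k+1+1) - a (k+1))/2) :=
          Finset.sum_congr rfl fun k _ => by ring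
      _ = (∑ k ∈ range (m-1), a (k+1)) + ∑ k ∈ range (m-1), (a (k+1+1) - a (k+1))/2 :=
          Finset.sum_add_distrib
      _ = (∑ k ∈ range (m-1), a (k+1)) + (a m - a 1) / 2 := by
          rw [← Finset.sum_div, htel]
  have hEqII : a 1 = - a m := by
    rw [hS2, hsplit2, hS1, hmp1] at hSS
    linarith
  -- conclude everything vanishes
  have hd : a 2 = a 1 := by linarith
  have ham : a m = a 1 := by
    have hap := hAP (m-1) (by omega)
    rw [show 1+(m-1) = m by omega] at hap
    rw [hd] at hap
    simpa using hap
  have ha1 : a 1 = 0 := by linarith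
  have ham0 : a m = 0 := by linarith
  have ha2 : a 2 = 0 := by linarith
  have hz1 : ∀ k, 1 ≤ k → k ≤ m → a k = 0 := by
    intro k h1 h2
    have hap := hAP (k-1) (by omega)
    rw [show 1+(k-1) = k by omega] at hap
    rw [hap, ha1, ha2]; ring
  have hzm1 : a (m+1) = 0 := by rw [hmp1, ham0]; ring
  have hz2 : ∀ k, 1 ≤ k → k + 1 ≤ m → a (k+m+1) = 0 := by
    intro k h1 h2
    have he := hE1 k h1 h2
    rw [hz1 k h1 (by omega), hz1 (k+1) (by omega) h2] at he
    linarith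
  funext j
  obtain ⟨j, hj⟩ := j
  show v ⟨j, hj⟩ = (0:ℝ)
  rw [← ha j hj]
  by_cases hj0 : j = 0
  · rw [hj0]; exact ha0
  · by_cases hjm : j ≤ m
    · exact hz1 j (by omega) hjm
    · by_cases hjm1 : j = m+1
      · rw [hjm1]; exact hzm1
      · obtain ⟨k, rfl⟩ : ∃ k, j = k + m + 1 := ⟨j - m - 1, by omega⟩
        exact hz2 k (by omega) (by omega)
/-- For odd `n ≥ 5`, `κ > 0` and `s ∉ {0, 2κ}`,
the matrix `Q(n,κ,s)` has rank `n − 1`. -/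
theorem stmt11 (n : ℕ) (hodd : Odd n) (hn : 5 ≤ n) (κ s : ℝ) (hκ : 0 < κ)
    (hs0 : s ≠ 0) (hs2 : s ≠ 2 * κ) :
    (Qmat n κ s).rank = n - 1 := by
  obtain ⟨m, hm2, hnm⟩ : ∃ m, 2 ≤ m ∧ n = 2*m+1 := by
    obtain ⟨t, ht⟩ := hodd
    exact ⟨t, by omega, by omega⟩
  have hn0 : 0 < n := by omega
  -- `Q` is skew-symmetric, hence has zero determinant in odd dimension
  have hT : (Qmat n κ s)ᵀ = - Qmat n κ s := by
    ext i j
    simp only [Matrix.transpose_apply, Matrix.neg_apply, Qmat, Matrix.of_apply]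
    split_ifs <;> first | (exfalso; omega) | ring
  have hdet : (Qmat n κ s).det = 0 := by
    have h2 := congrArg Matrix.det hT
    rw [Matrix.det_transpose, Matrix.det_neg, Fintype.card_fin, hodd.neg_one_pow] at h2
    linarith
  obtain ⟨w, hw_ne, hw_eq⟩ := (Matrix.exists_mulVec_eq_zero_iff).mpr hdet
  -- the kernel has dimension at most one
  have hker_le : Module.finrank ℝ (LinearMap.ker (Qmat n κ s).mulVecLin) ≤ 1 := by
    have hinj : Function.Injective ((LinearMap.proj (⟨0, hn0⟩ : Fin n)).comp
        (Submodule.subtype (LinearMap.ker (Qmat n κ s).mulVecLin))) := by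
      rw [← LinearMap.ker_eq_bot, LinearMap.ker_eq_bot']
      intro x hx
      obtain ⟨u, hu⟩ := x
      have hu' : (Qmat n κ s).mulVec u = 0 := by
        have := LinearMap.mem_ker.mp hu
        rwa [Matrix.mulVecLin_apply] at this
      have h00 : u ⟨0, hn0⟩ = 0 := by simpa using hx
      have hz := Qmat_ker_eq_zero n m hnm hm2 κ s (ne_of_gt hκ) u hu' h00
      exact Subtype.ext hz
    have hle := LinearMap.finrank_le_finrank_of_injective hinj
    simpa using hle
  -- the kernel is nontrivial
  have hker_pos : 0 < Module.finrank ℝ (LinearMap.ker (Qmat n κ s).mulVecLin) := by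
    have hmem : w ∈ LinearMap.ker (Qmat n κ s).mulVecLin := by
      rw [LinearMap.mem_ker, Matrix.mulVecLin_apply]; exact hw_eq
    by_contra hc
    push_neg at hc
    have h0 : Module.finrank ℝ (LinearMap.ker (Qmat n κ s).mulVecLin) = 0 := by omega
    have hbot := Submodule.finrank_eq_zero.mp h0
    rw [hbot] at hmem
    exact hw_ne ((Submodule.mem_bot ℝ).mp hmem)
  -- rank-nullity
  have hrank := LinearMap.finrank_range_add_finrank_ker ((Qmat n κ s).mulVecLin)
  rw [Module.finrank_fintype_fun_eq_card, Fintype.card_fin] at hrank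
  have hrdef : (Qmat n κ s).rank
      = Module.finrank ℝ (LinearMap.range (Qmat n κ s).mulVecLin) := rfl
  rw [hrdef]
  omega
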